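/- With Ĩ = {α ∈ Δ : (α̃|α) = 0}, one has w₀ w_Ĩ = w_Ĩ w₀ = s_{α̃}, i.e. the product of the longest element of W with the longest element of the parabolic subgroup W_Ĩ equals the reflection in the highest root α̃. -/

import Mathlib

open scoped RealInnerProductSpace Classical

noncomputable section

variable {V : Type} [NormedAddCommGroup V] [InnerProductSpace ℝ V] [FiniteDimensional ℝ V]

/-- The orthogonal reflection of `V` in the hyperplane orthogonal to `α`
(the reflection `s_α` when `α` is a root). -/
def sref (α : V) : V ≃ₗᵢ[ℝ] V := Submodule.reflection (Submodule.span ℝ {α})ᗮ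

/-- The pairing `⟨β, γ∨⟩ = 2(β|γ)/(γ|γ)` of a vector with the coroot of `γ`. -/
def cpair (β γ : V) : ℝ := 2 * ⟪β, γ⟫ / ⟪γ, γ⟫

/-- An irreducible reduced (crystallographic) root system in the real inner product
space `V`, the inner product being invariant under the Weyl group (automatic, since
reflections are isometries), normalized so that the shortest roots have squared length `1`. -/
structure NRootSystem (V : Type) [NormedAddCommGroup V] [InnerProductSpace ℝ V]
    [FiniteDimensional ℝ V] where
  Φ : Finset V
  nonempty : Φ.Nonempty
  zero_not_mem : (0 : V) ∉ Φ
  span_eq_top : Submodule.span ℝ (Φ : Set V) = ⊤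
  reduced : ∀ α ∈ Φ, ∀ t : ℝ, t • α ∈ Φ → t = 1 ∨ t = -1
  pairing_int : ∀ α ∈ Φ, ∀ β ∈ Φ, ∃ n : ℤ, 2 * ⟪β, α⟫ = n * ⟪α, α⟫
  reflect_mem : ∀ α ∈ Φ, ∀ β ∈ Φ, sref α β ∈ Φ
  irreducible : ∀ S : Finset V, S ⊆ Φ → S.Nonempty → (Φ \ S).Nonempty →
    ∃ α ∈ S, ∃ β ∈ Φ \ S, ⟪α, β⟫ ≠ 0
  norm_one_le : ∀ α ∈ Φ, 1 ≤ ⟪α, α⟫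
  exists_norm_one : ∃ α ∈ Φ, ⟪α, α⟫ = 1

namespace NRootSystem

variable (R : NRootSystem V)

/-- `r`, the maximal squared length of a root. -/
def r : ℝ := R.Φ.sup' R.nonempty fun α => ⟪α, α⟫

/-- long roots -/
def IsLong (α : V) : Prop := α ∈ R.Φ ∧ ⟪α, α⟫ = R.r

/-- short roots -/
def IsShort (α : V) : Prop := α ∈ R.Φ ∧ ⟪α, α⟫ < R.r

/-- The Weyl group `W`, generated by the reflections in the roots. -/
def Weyl : Subgroup (V ≃ₗᵢ[ℝ] V) := Subgroup.closure (sref '' (R.Φ : Set V))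

end NRootSystem

/-- The standard parabolic subgroup `W_I` generated by the reflections in `I ⊆ Δ`. -/
def WeylP (I : Finset V) : Subgroup (V ≃ₗᵢ[ℝ] V) := Subgroup.closure (sref '' (I : Set V))

/-- A base (set of simple roots) `Δ` of the root system, together with the
integral coordinates `coeff γ α` of each root `γ` in the basis `Δ`; every root is a
nonnegative or a nonpositive integral combination of the simple roots. -/
structure Base {V : Type} [NormedAddCommGroup V] [InnerProductSpace ℝ V]
    [FiniteDimensional ℝ V] (R : NRootSystem V) where
  Δ : Finset V
  subset : Δ ⊆ R.Φ
  indep : LinearIndependent ℝ (fun a : {x : V // x ∈ Δ} => (a : V))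
  coeff : V → V → ℤ
  coeff_spec : ∀ γ ∈ R.Φ, γ = ∑ α ∈ Δ, (coeff γ α : ℝ) • α
  coeff_sign : ∀ γ ∈ R.Φ, (∀ α ∈ Δ, 0 ≤ coeff γ α) ∨ (∀ α ∈ Δ, coeff γ α ≤ 0)

namespace Base

variable {R : NRootSystem V} (B : Base R)

/-- positive roots -/
def IsPos (γ : V) : Prop := γ ∈ R.Φ ∧ ∀ α ∈ B.Δ, 0 ≤ B.coeff γ α

/-- negative roots -/
def IsNeg (γ : V) : Prop := γ ∈ R.Φ ∧ ∀ α ∈ B.Δ, B.coeff γ α ≤ 0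

/-- the height of a root -/
def ht (γ : V) : ℤ := ∑ α ∈ B.Δ, B.coeff γ α

/-- the dual height `ht∨ γ = ht (γ∨)`: the height of the coroot `γ∨ = 2γ/(γ|γ)`
with respect to the basis of simple coroots `α∨ = 2α/(α|α)`, `α ∈ Δ`. -/
def htv (γ : V) : ℝ := ∑ α ∈ B.Δ, (B.coeff γ α : ℝ) * ⟪α, α⟫ / ⟪γ, γ⟫

/-- The length of `w`: the minimal length of an expression of `w` as a product of
simple reflections. -/
def len (w : V ≃ₗᵢ[ℝ] V) : ℕ :=
  sInf {n | ∃ g : Fin n → V, (∀ i, g i ∈ B.Δ) ∧ w = (List.ofFn fun i => sref (g i)).prod}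

/-- `w` is the longest element of the subgroup `H`. -/
def IsLongest (H : Subgroup (V ≃ₗᵢ[ℝ] V)) (w : V ≃ₗᵢ[ℝ] V) : Prop :=
  w ∈ H ∧ ∀ u ∈ H, B.len u ≤ B.len w

/-- `X_I = {w ∈ W | w(Φ_I⁺) ⊆ Φ⁺}`, the set of minimal length coset
representatives of `W/W_I`. -/
def XI (I : Finset V) : Set (V ≃ₗᵢ[ℝ] V) :=
  {w | w ∈ R.Weyl ∧
    ∀ γ, γ ∈ R.Φ → γ ∈ Submodule.span ℝ (I : Set V) → B.IsPos γ → B.IsPos (w γ)}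

/-- `h` is the highest root. -/
def IsHighest (h : V) : Prop :=
  h ∈ R.Φ ∧ ∀ γ ∈ R.Φ, ∀ α ∈ B.Δ, B.coeff γ α ≤ B.coeff h α

/-- `Ĩ = {α ∈ Δ | (h|α) = 0}`, the simple roots orthogonal to the highest root `h`. -/
def Itil (h : V) : Finset V := B.Δ.filter fun α => ⟪h, α⟫ = 0

/-- The level `L(α)` of a long root `α`, where `h` is the highest root:
`L(α) = ht∨(h) − ht∨(α)` if `α > 0` and `L(α) = ht∨(h) − ht∨(α) − 1` if `α < 0`. -/
def level (h α : V) : ℝ :=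
  if B.IsPos α then B.htv h - B.htv α else B.htv h - B.htv α - 1

/-- The elementary step relation `β →_γ α` on long roots (`γ` a positive root):
`α = s_γ(β)` and `L(α) = L(β) + 1`. -/
def Step (h γ β α : V) : Prop :=
  R.IsLong β ∧ R.IsLong α ∧ B.IsPos γ ∧ α = sref γ β ∧
    B.level h α = B.level h β + 1

/-- `g` is the sequence of positive roots of a path
`β = β₀ →_{g 0} β₁ →_{g 1} ⋯ →_{g (n-1)} β_n = α` from `β` to `α`. -/
def IsPathWord (h : V) {n : ℕ} (g : Fin n → V) (β α : V) : Prop :=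
  ∃ c : Fin (n + 1) → V, c 0 = β ∧ c (Fin.last n) = α ∧
    ∀ i : Fin n, B.Step h (g i) (c i.castSucc) (c i.succ)

/-- a path all of whose steps use simple roots -/
def IsSimplePathWord (h : V) {n : ℕ} (g : Fin n → V) (β α : V) : Prop :=
  B.IsPathWord h g β α ∧ ∀ i, g i ∈ B.Δ

/-- there is a path from `β` to `α`, i.e. `α ⪯ β` -/
def HasPath (h β α : V) : Prop := ∃ (n : ℕ) (g : Fin n → V), B.IsPathWord h g β α

/-- there is a simple path from `β` to `α` -/
def HasSimplePath (h β α : V) : Prop :=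
  ∃ (n : ℕ) (g : Fin n → V), B.IsSimplePathWord h g β α

/-- The covering relation `w →_γ w'` for the Bruhat order:
`w' = s_γ w` and `l(w') = l(w) + 1`, for a positive root `γ`. -/
def BStep (γ : V) (w w' : V ≃ₗᵢ[ℝ] V) : Prop :=
  B.IsPos γ ∧ w' = sref γ * w ∧ B.len w' = B.len w + 1

/-- The Bruhat order on `W`: the reflexive–transitive closure of the covering
relations. -/
def bruhatLE : (V ≃ₗᵢ[ℝ] V) → (V ≃ₗᵢ[ℝ] V) → Prop :=
  Relation.ReflTransGen fun w w' => ∃ γ, B.BStep γ w w'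

/-- `x` is an element of `W` with `x(β) = α` of the minimal possible length
`|L(α) − L(β)|` (this is the element `x_{αβ}` when it exists). -/
def MinTake (h β α : V) (x : V ≃ₗᵢ[ℝ] V) : Prop :=
  x ∈ R.Weyl ∧ x β = α ∧ (B.len x : ℝ) = |B.level h α - B.level h β|

/-- `g` is a reduced expression of `x` as a product of simple reflections. -/
def IsReducedWord {n : ℕ} (g : Fin n → V) (x : V ≃ₗᵢ[ℝ] V) : Prop :=
  (∀ i, g i ∈ B.Δ) ∧ x = (List.ofFn fun i => sref (g i)).prod ∧ n = B.len x

/-- The depth of a positive root `β`: the minimal integer `k` such that there is an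
element `w` of `W` of length `k` with `w(β) < 0`. -/
def depth (β : V) : ℕ := sInf {n | ∃ w ∈ R.Weyl, B.len w = n ∧ B.IsNeg (w β)}

end Base


/-! ### Auxiliary development -/

set_option linter.unusedSectionVars false

section Aux

lemma sref_apply' (α v : V) (hα : α ≠ 0) :
    sref α v = v - (2 * ⟪v, α⟫ / ⟪α, α⟫) • α := by
  rw [sref, Submodule.reflection_orthogonal_apply, Submodule.reflection_singleton_apply]
  simp only [RCLike.ofReal_real_eq_id, id_eq]
  have h1 : (‖α‖ : ℝ) ^ 2 = ⟪α, α⟫ := (real_inner_self_eq_norm_sq α).symm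
  rw [h1, real_inner_comm, two_smul,
    show (2 : ℝ) * ⟪v, α⟫ / ⟪α, α⟫ = ⟪v, α⟫ / ⟪α, α⟫ + ⟪v, α⟫ / ⟪α, α⟫ by ring,
    add_smul]
  abel

lemma sref_apply (α v : V) (hα : α ≠ 0) : sref α v = v - cpair v α • α :=
  sref_apply' α v hα

lemma sref_self (α : V) : sref α α = -α :=
  Submodule.reflection_orthogonalComplement_singleton_eq_neg α

@[simp] lemma sref_mul_self (α : V) : sref α * sref α = 1 :=
  Submodule.reflection_mul_reflection _

@[simp] lemma sref_inv (α : V) : (sref α)⁻¹ = sref α := Submodule.reflection_inv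

lemma sref_sref (α v : V) : sref α (sref α v) = v := Submodule.reflection_reflection _ v

lemma sref_conj (u : V ≃ₗᵢ[ℝ] V) (x : V) (hx : x ≠ 0) :
    u * sref x * u⁻¹ = sref (u x) := by
  have hux : u x ≠ 0 := fun hc => hx (by simpa using congrArg u.symm hc)
  ext v
  have h1 : (u * sref x * u⁻¹) v = u (sref x (u.symm v)) := rfl
  have h2 : ⟪u.symm v, x⟫ = ⟪v, u x⟫ := by
    conv_rhs => rw [show v = u (u.symm v) from (u.apply_symm_apply v).symm]
    exact (u.inner_map_map _ _).symm
  have h3 : ⟪u x, u x⟫ = ⟪x, x⟫ := u.inner_map_map x x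
  rw [h1, sref_apply' x _ hx, sref_apply' (u x) v hux, map_sub, map_smul, h2, h3,
    u.apply_symm_apply]

lemma sref_orth (x v : V) (hv : ⟪v, x⟫ = 0) : sref x v = v := by
  rcases eq_or_ne x 0 with rfl | hx
  · simp only [sref, Submodule.span_zero_singleton, Submodule.bot_orthogonal_eq_top]
    exact Submodule.reflection_mem_subspace_eq_self Submodule.mem_top
  · rw [sref_apply' x v hx, hv]; simp

end Aux

namespace Base

variable {R : NRootSystem V} (B : Base R)

lemma root_ne_zero {γ : V} (hγ : γ ∈ R.Φ) : γ ≠ 0 :=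
  fun h => R.zero_not_mem (h ▸ hγ)

lemma root_inner_pos {γ : V} (hγ : γ ∈ R.Φ) : 0 < ⟪γ, γ⟫ :=
  lt_of_le_of_ne real_inner_self_nonneg
    (fun h => root_ne_zero hγ ((@inner_self_eq_zero ℝ _ _ _ _ γ).mp h.symm))

lemma neg_mem {γ : V} (hγ : γ ∈ R.Φ) : -γ ∈ R.Φ := by
  have := R.reflect_mem γ hγ γ hγ
  rwa [sref_self] at this

lemma sum_smul_eq_zero {d : V → ℝ} (h : ∑ α ∈ B.Δ, d α • α = 0) :
    ∀ α ∈ B.Δ, d α = 0 := by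
  have hli := Fintype.linearIndependent_iff.mp B.indep
  have h' : ∑ a : {x // x ∈ B.Δ}, d a • (a : V) = 0 := by
    rw [Finset.sum_coe_sort B.Δ (fun α => d α • α)]; exact h
  intro α hα
  exact hli (fun a => d a) h' ⟨α, hα⟩

lemma coeff_eq {γ : V} (hγ : γ ∈ R.Φ) {d : V → ℝ} (h : γ = ∑ α ∈ B.Δ, d α • α) :
    ∀ α ∈ B.Δ, d α = (B.coeff γ α : ℝ) := by
  have h0 : ∑ α ∈ B.Δ, (d α - (B.coeff γ α : ℝ)) • α = 0 := by
    simp only [sub_smul]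
    rw [Finset.sum_sub_distrib, ← h, ← B.coeff_spec γ hγ, sub_self]
  intro α hα
  have := B.sum_smul_eq_zero h0 α hα
  linarith

lemma coeff_neg {γ : V} (hγ : γ ∈ R.Φ) {α : V} (hα : α ∈ B.Δ) :
    B.coeff (-γ) α = - B.coeff γ α := by
  have h2 : -γ = ∑ β ∈ B.Δ, (-(B.coeff γ β : ℝ)) • β := by
    calc -γ = -∑ β ∈ B.Δ, (B.coeff γ β : ℝ) • β := by rw [← B.coeff_spec γ hγ]
    _ = ∑ β ∈ B.Δ, (-(B.coeff γ β : ℝ)) • β := by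
        simp only [neg_smul]; rw [Finset.sum_neg_distrib]
  have := B.coeff_eq (neg_mem hγ) h2 α hα
  exact_mod_cast this.symm

lemma pos_or_neg {γ : V} (hγ : γ ∈ R.Φ) : B.IsPos γ ∨ B.IsNeg γ := by
  rcases B.coeff_sign γ hγ with h | h
  exacts [Or.inl ⟨hγ, h⟩, Or.inr ⟨hγ, h⟩]

lemma pos_neg_absurd {γ : V} (h1 : B.IsPos γ) (h2 : B.IsNeg γ) : False := by
  have hc : ∀ α ∈ B.Δ, (B.coeff γ α : ℝ) = 0 := by
    intro α hα
    have := le_antisymm (h2.2 α hα) (h1.2 α hα)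
    exact_mod_cast this
  have hz : γ = 0 := by
    rw [B.coeff_spec γ h1.1]
    refine Finset.sum_eq_zero fun α hα => ?_
    rw [hc α hα, zero_smul]
  exact root_ne_zero h1.1 hz

lemma not_pos_iff_neg {γ : V} (hγ : γ ∈ R.Φ) : ¬ B.IsPos γ ↔ B.IsNeg γ :=
  ⟨fun h => (B.pos_or_neg hγ).resolve_left h,
   fun h2 h1 => B.pos_neg_absurd h1 h2⟩

lemma isNeg_neg {γ : V} (h : B.IsPos γ) : B.IsNeg (-γ) := by
  refine ⟨neg_mem h.1, fun α hα => ?_⟩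
  rw [B.coeff_neg h.1 hα]
  exact neg_nonpos.mpr (h.2 α hα)

lemma isPos_neg {γ : V} (h : B.IsNeg γ) : B.IsPos (-γ) := by
  refine ⟨neg_mem h.1, fun α hα => ?_⟩
  rw [B.coeff_neg h.1 hα]
  exact neg_nonneg.mpr (h.2 α hα)

lemma cpair_int {α β : V} (hα : α ∈ R.Φ) (hβ : β ∈ R.Φ) :
    ∃ n : ℤ, cpair β α = (n : ℝ) ∧ 2 * ⟪β, α⟫ = (n : ℝ) * ⟪α, α⟫ := by
  obtain ⟨n, hn⟩ := R.pairing_int α hα β hβ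
  exact ⟨n, by rw [cpair, hn, mul_div_assoc,
    div_self (ne_of_gt (root_inner_pos hα)), mul_one], hn⟩

lemma sref_eq_sub {α β : V} (hα : α ∈ R.Φ) (hβ : β ∈ R.Φ) :
    ∃ n : ℤ, sref α β = β - (n : ℝ) • α ∧ 2 * ⟪β, α⟫ = (n : ℝ) * ⟪α, α⟫ := by
  obtain ⟨n, hc, hn⟩ := cpair_int hα hβ
  exact ⟨n, by rw [sref_apply α β (root_ne_zero hα), hc], hn⟩

lemma coeff_sref_simple {α β γ : V} (hα : α ∈ B.Δ) (hβ : β ∈ R.Φ) (hγ : γ ∈ B.Δ)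
    (hne : γ ≠ α) : B.coeff (sref α β) γ = B.coeff β γ := by
  obtain ⟨n, hs, -⟩ := sref_eq_sub (B.subset hα) hβ
  have hmem : sref α β ∈ R.Φ := R.reflect_mem α (B.subset hα) β hβ
  have hrep : sref α β = ∑ δ ∈ B.Δ,
      ((B.coeff β δ : ℝ) - (n : ℝ) * (if δ = α then 1 else 0)) • δ := by
    simp only [sub_smul]
    rw [Finset.sum_sub_distrib, hs]
    congr 1
    · exact B.coeff_spec β hβ
    · rw [Finset.sum_congr rfl (fun δ _ => show ((n : ℝ) * (if δ = α then 1 else 0)) • δ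
          = if δ = α then (n : ℝ) • δ else 0 by split <;> simp)]
      rw [Finset.sum_ite_eq' B.Δ α (fun δ => (n : ℝ) • δ), if_pos hα]
  have := (B.coeff_eq hmem hrep γ hγ).symm
  rw [if_neg hne, mul_zero, sub_zero] at this
  exact_mod_cast this

lemma mul_apply (u v : V ≃ₗᵢ[ℝ] V) (x : V) : (u * v) x = u (v x) := rfl

lemma inv_apply_symm (u : V ≃ₗᵢ[ℝ] V) (x : V) : u⁻¹ x = u.symm x := rfl

lemma one_apply (x : V) : (1 : V ≃ₗᵢ[ℝ] V) x = x := rfl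

lemma weyl_maps' {w : V ≃ₗᵢ[ℝ] V} (hw : w ∈ R.Weyl) :
    ∀ γ ∈ R.Φ, w γ ∈ R.Φ ∧ w⁻¹ γ ∈ R.Φ := by
  induction hw using Subgroup.closure_induction with
  | mem x hx =>
      obtain ⟨δ, hδ, rfl⟩ := hx
      intro γ hγ
      refine ⟨R.reflect_mem δ hδ γ hγ, ?_⟩
      rw [sref_inv]
      exact R.reflect_mem δ hδ γ hγ
  | one => intro γ hγ; rw [inv_one]; exact ⟨hγ, hγ⟩
  | mul x y hx hy px py =>
      intro γ hγ
      rw [mul_inv_rev]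
      exact ⟨(px _ ((py γ hγ).1)).1, (py _ ((px γ hγ).2)).2⟩
  | inv x hx px =>
      intro γ hγ
      rw [inv_inv]
      exact ⟨(px γ hγ).2, (px γ hγ).1⟩

lemma weyl_maps {w : V ≃ₗᵢ[ℝ] V} (hw : w ∈ R.Weyl) {γ : V} (hγ : γ ∈ R.Φ) :
    w γ ∈ R.Φ := (weyl_maps' hw γ hγ).1

lemma sref_mem_weyl {γ : V} (hγ : γ ∈ R.Φ) : sref γ ∈ R.Weyl :=
  Subgroup.subset_closure ⟨γ, hγ, rfl⟩

lemma exists_coeff_pos_ne {α β : V} (hα : α ∈ B.Δ) (hβ : B.IsPos β) (hne : β ≠ α) :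
    ∃ γ ∈ B.Δ, γ ≠ α ∧ 0 < B.coeff β γ := by
  by_contra hcon
  push_neg at hcon
  have hz : ∀ γ ∈ B.Δ, γ ≠ α → (B.coeff β γ : ℝ) = 0 := by
    intro γ hγ hgne
    have h1 := hcon γ hγ hgne
    have h2 := hβ.2 γ hγ
    have : B.coeff β γ = 0 := le_antisymm h1 h2
    exact_mod_cast this
  have hrep : β = (B.coeff β α : ℝ) • α := by
    conv_lhs => rw [B.coeff_spec β hβ.1]
    exact Finset.sum_eq_single α
      (fun γ hγ hgne => by rw [hz γ hγ hgne, zero_smul])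
      (fun hcontra => absurd hα hcontra)
  have hroot : ((B.coeff β α : ℝ)) • α ∈ R.Φ := hrep ▸ hβ.1
  rcases R.reduced α (B.subset hα) _ hroot with h1 | h1
  · exact hne (by rw [hrep, h1, one_smul])
  · have : (B.coeff β α : ℝ) = -1 := h1
    have h2 : B.coeff β α = -1 := by exact_mod_cast this
    have := hβ.2 α hα
    omega

lemma isPos_sref_simple {α β : V} (hα : α ∈ B.Δ) (hβ : B.IsPos β) (hne : β ≠ α) :
    B.IsPos (sref α β) := by
  obtain ⟨γ, hγ, hgne, hcpos⟩ := B.exists_coeff_pos_ne hα hβ hne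
  have hmem : sref α β ∈ R.Φ := R.reflect_mem α (B.subset hα) β hβ.1
  have hco : B.coeff (sref α β) γ = B.coeff β γ := B.coeff_sref_simple hα hβ.1 hγ hgne
  rcases B.pos_or_neg hmem with h | h
  · exact h
  · exfalso
    have := h.2 γ hγ
    omega

lemma mem_span_iff_coeff {β : V} (hβ : β ∈ R.Φ) {S : Finset V} (hS : S ⊆ B.Δ) :
    β ∈ Submodule.span ℝ (S : Set V) ↔ ∀ γ ∈ B.Δ, γ ∉ S → B.coeff β γ = 0 := by
  constructor
  · intro hmem
    obtain ⟨f, -, hf⟩ := Submodule.mem_span_finset.mp hmem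
    set g : V → ℝ := fun γ => if γ ∈ S then f γ else 0 with hg
    have hrep : β = ∑ γ ∈ B.Δ, g γ • γ := by
      rw [← Finset.sum_subset hS (fun x _ hx => by simp [hg, hx])]
      rw [← hf]
      exact (Finset.sum_congr rfl fun x hx => by simp [hg, hx]).symm
    intro γ hγ hγS
    have := B.coeff_eq hβ hrep γ hγ
    rw [hg] at this
    simp only [hγS, if_false] at this
    exact_mod_cast this.symm
  · intro hz
    have h0 : ∑ γ ∈ S, (B.coeff β γ : ℝ) • γ = ∑ γ ∈ B.Δ, (B.coeff β γ : ℝ) • γ :=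
      Finset.sum_subset hS (fun x hx hxS => by rw [hz x hx hxS]; simp)
    have : β = ∑ γ ∈ S, (B.coeff β γ : ℝ) • γ := by
      rw [h0]; exact B.coeff_spec β hβ
    rw [this]
    exact Submodule.sum_mem _ fun γ hγ =>
      Submodule.smul_mem _ _ (Submodule.subset_span hγ)

lemma coeff_apart {w : V ≃ₗᵢ[ℝ] V} {S : Finset V} (hS : S ⊆ B.Δ)
    (hw : ∀ x : V, w x - x ∈ Submodule.span ℝ (S : Set V))
    {β : V} (hβ : β ∈ R.Φ) (hwβ : w β ∈ R.Φ) {γ : V} (hγ : γ ∈ B.Δ) (hγS : γ ∉ S) :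
    B.coeff (w β) γ = B.coeff β γ := by
  obtain ⟨f, -, hf⟩ := Submodule.mem_span_finset.mp (hw β)
  set g : V → ℝ := fun δ => if δ ∈ S then f δ else 0 with hg
  have hsum : ∑ δ ∈ B.Δ, g δ • δ = w β - β := by
    rw [← Finset.sum_subset hS (fun x _ hx => by simp [hg, hx]), ← hf]
    exact Finset.sum_congr rfl fun x hx => by simp [hg, hx]
  have hrep : w β = ∑ δ ∈ B.Δ, ((B.coeff β δ : ℝ) + g δ) • δ := by
    simp only [add_smul]
    rw [Finset.sum_add_distrib, hsum, ← B.coeff_spec β hβ]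
    abel
  have := B.coeff_eq hwβ hrep γ hγ
  rw [hg] at this
  simp only [hγS, if_false, add_zero] at this
  exact_mod_cast this.symm

lemma isNeg_comb {w : V ≃ₗᵢ[ℝ] V} {S : Finset V} (hS : S ⊆ B.Δ)
    {β : V} (hβ : B.IsPos β)
    (hsupp : ∀ γ ∈ B.Δ, γ ∉ S → B.coeff β γ = 0)
    (hwΦ : ∀ α ∈ R.Φ, w α ∈ R.Φ)
    (hneg : ∀ α ∈ S, B.IsNeg (w α)) : B.IsNeg (w β) := by
  have hwβ : w β ∈ R.Φ := hwΦ β hβ.1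
  have hrep : w β = ∑ γ ∈ B.Δ,
      (∑ α ∈ S, (B.coeff β α : ℝ) * (B.coeff (w α) γ : ℝ)) • γ := by
    have h1 : w β = ∑ α ∈ S, (B.coeff β α : ℝ) • w α := by
      have h0 : ∑ α ∈ S, (B.coeff β α : ℝ) • w α = ∑ α ∈ B.Δ, (B.coeff β α : ℝ) • w α :=
        Finset.sum_subset hS (fun x hx hxS => by rw [hsupp x hx hxS]; simp)
      rw [h0]
      conv_lhs => rw [B.coeff_spec β hβ.1]
      rw [map_sum]
      simp only [map_smul]
    rw [h1]
    have h2 : ∀ α ∈ S, (B.coeff β α : ℝ) • w α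
        = ∑ γ ∈ B.Δ, ((B.coeff β α : ℝ) * (B.coeff (w α) γ : ℝ)) • γ := by
      intro α hα
      conv_lhs => rw [B.coeff_spec (w α) (hwΦ α (B.subset (hS hα)))]
      rw [Finset.smul_sum]
      exact Finset.sum_congr rfl fun γ _ => by rw [smul_smul]
    rw [Finset.sum_congr rfl h2, Finset.sum_comm]
    exact Finset.sum_congr rfl fun γ _ => by rw [Finset.sum_smul]
  refine ⟨hwβ, fun γ hγ => ?_⟩
  have hco := (B.coeff_eq hwβ hrep γ hγ).symm
  have hle : (B.coeff (w β) γ : ℝ) ≤ 0 := by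
    rw [hco]
    refine Finset.sum_nonpos fun α hα => ?_
    have h3 : (0 : ℝ) ≤ (B.coeff β α : ℝ) := by exact_mod_cast hβ.2 α (hS hα)
    have h4 : (B.coeff (w α) γ : ℝ) ≤ 0 := by exact_mod_cast (hneg α hα).2 γ hγ
    exact mul_nonpos_of_nonneg_of_nonpos h3 h4
  exact_mod_cast hle

lemma isPos_apart {w : V ≃ₗᵢ[ℝ] V} {S : Finset V} (hS : S ⊆ B.Δ)
    (hw : ∀ x : V, w x - x ∈ Submodule.span ℝ (S : Set V))
    {β : V} (hβ : B.IsPos β) (hβS : β ∉ Submodule.span ℝ (S : Set V))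
    (hwβ : w β ∈ R.Φ) :
    B.IsPos (w β) ∧ w β ∉ Submodule.span ℝ (S : Set V) := by
  have hex : ∃ γ ∈ B.Δ, γ ∉ S ∧ B.coeff β γ ≠ 0 := by
    by_contra hcon
    push_neg at hcon
    exact hβS ((B.mem_span_iff_coeff hβ.1 hS).mpr
      (fun γ hγ hγS => hcon γ hγ hγS))
  obtain ⟨γ, hγ, hγS, hγne⟩ := hex
  have hpos : 0 < B.coeff β γ := lt_of_le_of_ne (hβ.2 γ hγ) (Ne.symm hγne)
  have hco : B.coeff (w β) γ = B.coeff β γ := B.coeff_apart hS hw hβ.1 hwβ hγ hγS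
  have hwpos : B.IsPos (w β) := by
    rcases B.pos_or_neg hwβ with h | h
    · exact h
    · exfalso; have := h.2 γ hγ; omega
  refine ⟨hwpos, fun hmem => ?_⟩
  have := (B.mem_span_iff_coeff hwβ hS).mp hmem γ hγ hγS
  omega

lemma weylP_sub_weyl {I : Finset V} (hI : ↑I ⊆ (R.Φ : Set V)) :
    WeylP I ≤ R.Weyl :=
  Subgroup.closure_mono (Set.image_mono hI)

lemma weylP_translate {I : Finset V} (hI : ∀ α ∈ I, α ∈ R.Φ)
    {u : V ≃ₗᵢ[ℝ] V} (hu : u ∈ WeylP I) :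
    ∀ x : V, u x - x ∈ Submodule.span ℝ (I : Set V) := by
  induction hu using Subgroup.closure_induction with
  | mem x hx =>
      obtain ⟨α, hα, rfl⟩ := hx
      intro v
      rw [sref_apply α v (root_ne_zero (hI α hα))]
      rw [sub_sub_cancel_left]
      exact Submodule.neg_mem _ (Submodule.smul_mem _ _ (Submodule.subset_span hα))
  | one => intro v; rw [one_apply, sub_self]; exact Submodule.zero_mem _
  | mul x y hx hy px py =>
      intro v
      have : (x * y) v - v = (x (y v) - y v) + (y v - v) := by
        rw [mul_apply]; abel
      rw [this]
      exact Submodule.add_mem _ (px (y v)) (py v)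
  | inv x hx px =>
      intro v
      have : x⁻¹ v - v = -(x (x⁻¹ v) - x⁻¹ v) := by
        have hxx : x (x⁻¹ v) = v := by
          rw [inv_apply_symm, x.apply_symm_apply]
        rw [hxx]; abel
      rw [this]
      exact Submodule.neg_mem _ (px (x⁻¹ v))

lemma weylP_fix {I : Finset V} {h : V} (hI : ∀ α ∈ I, ⟪h, α⟫ = 0)
    {u : V ≃ₗᵢ[ℝ] V} (hu : u ∈ WeylP I) : u h = h := by
  induction hu using Subgroup.closure_induction with
  | mem x hx =>
      obtain ⟨α, hα, rfl⟩ := hx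
      exact sref_orth α h (hI α hα)
  | one => rw [one_apply]
  | mul x y hx hy px py => rw [mul_apply, py, px]
  | inv x hx px =>
      have : x⁻¹ (x h) = h := by rw [inv_apply_symm, x.symm_apply_apply]
      rw [px] at this; exact this

lemma sref_neg (γ : V) : sref (-γ) = sref γ := by
  unfold sref
  congr 1
  rw [show ({-γ} : Set V) = -({γ} : Set V) by simp, Submodule.span_neg]

/-- Words in the simple reflections. -/
def Wrd (w : V ≃ₗᵢ[ℝ] V) (n : ℕ) : Prop :=
  ∃ l : List V, (∀ x ∈ l, x ∈ B.Δ) ∧ l.length = n ∧ w = (l.map sref).prod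

lemma len_eq_sInf (w : V ≃ₗᵢ[ℝ] V) : B.len w = sInf {n | B.Wrd w n} := by
  unfold len Wrd
  congr 1
  ext n
  constructor
  · rintro ⟨g, hg, hw⟩
    refine ⟨List.ofFn g, ?_, List.length_ofFn (f := g), ?_⟩
    · intro x hx
      obtain ⟨i, rfl⟩ := List.mem_ofFn.mp hx
      exact hg i
    · rw [List.map_ofFn]; exact hw
  · rintro ⟨l, hl, rfl, hw⟩
    refine ⟨l.get, fun i => hl _ (l.get_mem i), ?_⟩
    rw [show (List.ofFn fun i => sref (l.get i)) = l.map sref from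
      List.ofFn_getElem_eq_map l sref]
    exact hw

lemma wrd_len_le {w : V ≃ₗᵢ[ℝ] V} {n : ℕ} (h : B.Wrd w n) : B.len w ≤ n := by
  rw [B.len_eq_sInf]; exact Nat.sInf_le h

lemma wrd_reduced {w : V ≃ₗᵢ[ℝ] V} (h : ∃ n, B.Wrd w n) : B.Wrd w (B.len w) := by
  rw [B.len_eq_sInf]; exact Nat.sInf_mem h

lemma word_prod_mem {l : List V} (hl : ∀ x ∈ l, x ∈ B.Δ) :
    (l.map sref).prod ∈ R.Weyl := by
  induction l with
  | nil => rw [List.map_nil, List.prod_nil]; exact one_mem _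
  | cons a t ih =>
      rw [List.map_cons, List.prod_cons]
      exact mul_mem (sref_mem_weyl (B.subset (hl a List.mem_cons_self)))
        (ih fun x hx => hl x (List.mem_cons_of_mem _ hx))

lemma coeff_sref_simple' {α β : V} (hα : α ∈ B.Δ) (hβ : β ∈ R.Φ) {n : ℤ}
    (hn : 2 * ⟪β, α⟫ = (n : ℝ) * ⟪α, α⟫) {γ : V} (hγ : γ ∈ B.Δ) :
    B.coeff (sref α β) γ = B.coeff β γ - n * (if γ = α then 1 else 0) := by
  have hs : sref α β = β - (n : ℝ) • α := by
    rw [sref_apply α β (root_ne_zero (B.subset hα)), cpair, hn, mul_div_assoc,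
      div_self (ne_of_gt (root_inner_pos (B.subset hα))), mul_one]
  have hmem : sref α β ∈ R.Φ := R.reflect_mem α (B.subset hα) β hβ
  have hrep : sref α β = ∑ δ ∈ B.Δ,
      ((B.coeff β δ : ℝ) - (n : ℝ) * (if δ = α then 1 else 0)) • δ := by
    simp only [sub_smul]
    rw [Finset.sum_sub_distrib, hs]
    congr 1
    · exact B.coeff_spec β hβ
    · rw [Finset.sum_congr rfl (fun δ _ => show ((n : ℝ) * (if δ = α then 1 else 0)) • δ
          = if δ = α then (n : ℝ) • δ else 0 by split <;> simp)]
      rw [Finset.sum_ite_eq' B.Δ α (fun δ => (n : ℝ) • δ), if_pos hα]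
  have := (B.coeff_eq hmem hrep γ hγ).symm
  have h2 : (B.coeff (sref α β) γ : ℝ)
      = (B.coeff β γ : ℝ) - (n : ℝ) * (if γ = α then 1 else 0) := this
  split at h2 <;> split <;> first
    | (exact_mod_cast h2)
    | simp_all

lemma ht_sref_simple {α β : V} (hα : α ∈ B.Δ) (hβ : β ∈ R.Φ) {n : ℤ}
    (hn : 2 * ⟪β, α⟫ = (n : ℝ) * ⟪α, α⟫) :
    B.ht (sref α β) = B.ht β - n := by
  unfold ht
  rw [Finset.sum_congr rfl (fun γ hγ => B.coeff_sref_simple' hα hβ hn hγ)]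
  rw [Finset.sum_sub_distrib]
  congr 1
  have hc : ∀ γ ∈ B.Δ, (n * if γ = α then 1 else 0) = if γ = α then n else 0 :=
    fun γ _ => by split <;> simp
  rw [Finset.sum_congr rfl hc, Finset.sum_ite_eq' B.Δ α (fun _ => n), if_pos hα]

lemma ht_pos {γ : V} (hγ : B.IsPos γ) : 1 ≤ B.ht γ := by
  have h0 : 0 ≤ B.ht γ := Finset.sum_nonneg fun α hα => hγ.2 α hα
  rcases h0.lt_or_eq with h | h
  · omega
  · exfalso
    have hz : ∀ α ∈ B.Δ, B.coeff γ α = 0 := by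
      intro α hα
      have := Finset.sum_eq_zero_iff_of_nonneg (fun α hα => hγ.2 α hα) |>.mp h.symm
      exact this α hα
    have : γ = 0 := by
      rw [B.coeff_spec γ hγ.1]
      exact Finset.sum_eq_zero fun α hα => by rw [hz α hα]; simp
    exact root_ne_zero hγ.1 this

lemma exists_inner_pos {γ : V} (hγ : B.IsPos γ) : ∃ α ∈ B.Δ, 0 < ⟪γ, α⟫ := by
  by_contra hcon
  push_neg at hcon
  have h0 : 0 < ⟪γ, γ⟫ := root_inner_pos hγ.1
  have h1 : ⟪γ, γ⟫ = ∑ α ∈ B.Δ, (B.coeff γ α : ℝ) * ⟪γ, α⟫ := by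
    conv_lhs => rw [show ⟪γ, γ⟫ = ⟪γ, ∑ α ∈ B.Δ, (B.coeff γ α : ℝ) • α⟫ by
      rw [← B.coeff_spec γ hγ.1]]
    rw [inner_sum]
    exact Finset.sum_congr rfl fun α _ => real_inner_smul_right γ α _
  have h2 : ⟪γ, γ⟫ ≤ 0 := by
    rw [h1]
    refine Finset.sum_nonpos fun α hα => mul_nonpos_of_nonneg_of_nonpos ?_ (hcon α hα)
    exact_mod_cast hγ.2 α hα
  linarith

lemma sref_pos_word {γ : V} (hγ : B.IsPos γ) : ∃ n, B.Wrd (sref γ) n := by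
  obtain ⟨k, hk⟩ : ∃ k, (B.ht γ).toNat ≤ k := ⟨(B.ht γ).toNat, le_rfl⟩
  induction k generalizing γ with
  | zero =>
      exfalso
      have := B.ht_pos hγ
      omega
  | succ k ih =>
      by_cases hγΔ : γ ∈ B.Δ
      · refine ⟨1, [γ], by simpa using hγΔ, rfl, by simp⟩
      · obtain ⟨α, hα, hpos⟩ := B.exists_inner_pos hγ
        have hne : γ ≠ α := fun h => hγΔ (h ▸ hα)
        obtain ⟨n, hn⟩ := R.pairing_int α (B.subset hα) γ hγ.1
        have hn1 : 1 ≤ n := by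
          by_contra hcon
          push_neg at hcon
          have h0 : (n : ℝ) ≤ 0 := by exact_mod_cast (by omega : n ≤ 0)
          have haa : 0 < ⟪α, α⟫ := root_inner_pos (B.subset hα)
          nlinarith
        have hsp : B.IsPos (sref α γ) := B.isPos_sref_simple hα hγ hne
        have hht : B.ht (sref α γ) = B.ht γ - n := B.ht_sref_simple hα hγ.1 hn
        have hle : (B.ht (sref α γ)).toNat ≤ k := by
          have := B.ht_pos hγ
          have := B.ht_pos hsp
          omega
        obtain ⟨m, l, hl, hlen, hprod⟩ := ih hsp hle
        refine ⟨m + 2, α :: (l ++ [α]), ?_, by simp [hlen], ?_⟩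
        · intro x hx
          rcases List.mem_cons.mp hx with rfl | hx
          · exact hα
          · rcases List.mem_append.mp hx with hx | hx
            · exact hl x hx
            · rw [List.mem_singleton.mp hx]; exact hα
        · have hconj : sref (sref α γ) = sref α * sref γ * (sref α)⁻¹ :=
            (sref_conj (sref α) γ (root_ne_zero hγ.1)).symm
          have : sref γ = sref α * sref (sref α γ) * sref α := by
            rw [hconj, sref_inv,
              show sref α * (sref α * sref γ * sref α) * sref α
                = (sref α * sref α) * sref γ * (sref α * sref α) by group,
              sref_mul_self]
            group
          rw [this, hprod]
          simp [List.prod_append, List.prod_cons, mul_assoc]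

lemma exists_word {w : V ≃ₗᵢ[ℝ] V} (hw : w ∈ R.Weyl) : ∃ n, B.Wrd w n := by
  induction hw using Subgroup.closure_induction with
  | mem x hx =>
      obtain ⟨δ, hδ, rfl⟩ := hx
      rcases B.pos_or_neg hδ with h | h
      · exact B.sref_pos_word h
      · have : sref δ = sref (-δ) := (sref_neg δ).symm
        rw [this]
        exact B.sref_pos_word (B.isPos_neg h)
  | one => exact ⟨0, [], by simp, rfl, by simp⟩
  | mul x y hx hy px py =>
      obtain ⟨m, lx, hlx, hlxlen, hlxprod⟩ := px
      obtain ⟨n, ly, hly, hlylen, hlyprod⟩ := py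
      refine ⟨m + n, lx ++ ly, ?_, by simp [hlxlen, hlylen], ?_⟩
      · intro z hz
        rcases List.mem_append.mp hz with hz | hz
        exacts [hlx z hz, hly z hz]
      · rw [List.map_append, List.prod_append, hlxprod, hlyprod]
  | inv x hx px =>
      obtain ⟨m, lx, hlx, hlxlen, hlxprod⟩ := px
      refine ⟨m, lx.reverse, ?_, by simp [hlxlen], ?_⟩
      · intro z hz; exact hlx z (List.mem_reverse.mp hz)
      · rw [hlxprod, List.prod_inv_reverse]
        have h1 : List.map (fun x : V ≃ₗᵢ[ℝ] V => x⁻¹) (List.map sref lx)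
            = List.map sref lx := by
          rw [List.map_map,
            show ((fun x : V ≃ₗᵢ[ℝ] V => x⁻¹) ∘ sref) = (sref : V → V ≃ₗᵢ[ℝ] V)
              from funext fun z => sref_inv z]
        rw [h1, List.map_reverse]

lemma coeff_simple {α γ : V} (hα : α ∈ B.Δ) (hγ : γ ∈ B.Δ) :
    (B.coeff α γ : ℝ) = if γ = α then 1 else 0 := by
  have hrep : α = ∑ δ ∈ B.Δ, (if δ = α then (1 : ℝ) else 0) • δ := by
    rw [Finset.sum_congr rfl (fun δ (_ : δ ∈ B.Δ) =>
      show (if δ = α then (1 : ℝ) else 0) • δ = if δ = α then δ else 0 by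
        split <;> simp)]
    rw [Finset.sum_ite_eq' B.Δ α (fun δ => δ), if_pos hα]
  exact (B.coeff_eq (B.subset hα) hrep γ hγ).symm

lemma simple_isPos {α : V} (hα : α ∈ B.Δ) : B.IsPos α := by
  rcases B.pos_or_neg (B.subset hα) with h | h
  · exact h
  · exfalso
    have h1 := B.coeff_simple hα hα
    rw [if_pos rfl] at h1
    have h2 : (B.coeff α α : ℝ) ≤ 0 := by exact_mod_cast h.2 α hα
    rw [h1] at h2; linarith

lemma reduced_word {w : V ≃ₗᵢ[ℝ] V} (hw : w ∈ R.Weyl) : B.Wrd w (B.len w) :=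
  B.wrd_reduced (B.exists_word hw)

/-- The deletion lemma. -/
lemma deletion {l : List V} (hl : ∀ x ∈ l, x ∈ B.Δ) {α : V} (hα : α ∈ B.Δ)
    (hneg : ¬ B.IsPos ((l.map sref).prod α)) :
    ∃ l' : List V, (∀ x ∈ l', x ∈ B.Δ) ∧ l'.length + 1 = l.length ∧
      (l.map sref).prod * sref α = (l'.map sref).prod := by
  induction l with
  | nil =>
      exfalso
      apply hneg
      rw [List.map_nil, List.prod_nil, one_apply]
      exact B.simple_isPos hα
  | cons a t ih =>
      have ha : a ∈ B.Δ := hl a List.mem_cons_self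
      have htl : ∀ x ∈ t, x ∈ B.Δ := fun x hx => hl x (List.mem_cons_of_mem _ hx)
      set u := (t.map sref).prod with hu
      have huW : u ∈ R.Weyl := B.word_prod_mem htl
      have hprodcons : ((a :: t).map sref).prod = sref a * u := by
        rw [List.map_cons, List.prod_cons]
      have hβ : u α ∈ R.Φ := weyl_maps huW (B.subset hα)
      by_cases hc : B.IsPos (u α)
      · have hnotpos : ¬ B.IsPos (sref a (u α)) := by
          rw [← mul_apply, ← hprodcons]; exact hneg
        have heq : u α = a := by
          by_contra hne
          exact hnotpos (B.isPos_sref_simple ha hc hne)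
        have hconj : sref a = u * sref α * u⁻¹ := by
          rw [← heq]; exact (sref_conj u α (root_ne_zero (B.subset hα))).symm
        refine ⟨t, htl, by simp, ?_⟩
        rw [hprodcons, hconj, inv_mul_cancel_right, mul_assoc, sref_mul_self, mul_one]
      · obtain ⟨t', ht', hlen', hprod'⟩ := ih htl hc
        refine ⟨a :: t', fun x hx => ?_, by simp [← hlen'], ?_⟩
        · rcases List.mem_cons.mp hx with rfl | hx
          exacts [ha, ht' x hx]
        · rw [hprodcons, List.map_cons, List.prod_cons, ← hprod', mul_assoc]

lemma len_lt_mul_sref {w : V ≃ₗᵢ[ℝ] V} (hw : w ∈ R.Weyl) {α : V} (hα : α ∈ B.Δ)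
    (hpos : B.IsPos (w α)) : B.len w < B.len (w * sref α) := by
  set v := w * sref α with hv
  have hvW : v ∈ R.Weyl := mul_mem hw (sref_mem_weyl (B.subset hα))
  obtain ⟨l, hl, hlen, hprod⟩ := B.reduced_word hvW
  have hvα : ¬ B.IsPos ((l.map sref).prod α) := by
    rw [← hprod]
    have hva : v α = -(w α) := by rw [hv, mul_apply, sref_self, map_neg]
    rw [hva]
    intro hp
    exact B.pos_neg_absurd hp (B.isNeg_neg hpos)
  obtain ⟨l', hl', hlen', hprod'⟩ := B.deletion hl hα hvα
  have hw_eq : w = (l'.map sref).prod := by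
    rw [← hprod', ← hprod, hv, mul_assoc, sref_mul_self, mul_one]
  have hle : B.len w ≤ l'.length := B.wrd_len_le ⟨l', hl', rfl, hw_eq⟩
  omega

lemma longest_neg_simple {w₀ : V ≃ₗᵢ[ℝ] V} (hw₀ : B.IsLongest R.Weyl w₀)
    {α : V} (hα : α ∈ B.Δ) : B.IsNeg (w₀ α) := by
  have hW := hw₀.1
  have hwα : w₀ α ∈ R.Φ := weyl_maps hW (B.subset hα)
  rcases B.pos_or_neg hwα with hp | hn
  · exfalso
    have h1 := B.len_lt_mul_sref hW hα hp
    have h2 := hw₀.2 (w₀ * sref α) (mul_mem hW (sref_mem_weyl (B.subset hα)))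
    omega
  · exact hn

lemma itil_subset {h : V} : B.Itil h ⊆ B.Δ := Finset.filter_subset _ _

lemma longest_neg_simple_P {h : V} {wI : V ≃ₗᵢ[ℝ] V}
    (hwI : B.IsLongest (WeylP (B.Itil h)) wI) {α : V} (hα : α ∈ B.Itil h) :
    B.IsNeg (wI α) := by
  have hαΔ : α ∈ B.Δ := B.itil_subset hα
  have hIΦ : ((B.Itil h : Finset V) : Set V) ⊆ (R.Φ : Set V) := fun x hx =>
    B.subset (B.itil_subset hx)
  have hW : wI ∈ R.Weyl := weylP_sub_weyl hIΦ hwI.1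
  have hwα : wI α ∈ R.Φ := weyl_maps hW (B.subset hαΔ)
  rcases B.pos_or_neg hwα with hp | hn
  · exfalso
    have h1 := B.len_lt_mul_sref hW hαΔ hp
    have hsP : sref α ∈ WeylP (B.Itil h) := Subgroup.subset_closure ⟨α, hα, rfl⟩
    have h2 := hwI.2 (wI * sref α) (mul_mem hwI.1 hsP)
    omega
  · exact hn

lemma eq_one_of_pos {w : V ≃ₗᵢ[ℝ] V} (hw : w ∈ R.Weyl)
    (hp : ∀ β, B.IsPos β → B.IsPos (w β)) : w = 1 := by
  obtain ⟨l, hl, hlen, hprod⟩ := B.reduced_word hw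
  rcases List.eq_nil_or_concat l with rfl | ⟨l', a, rfl⟩
  · rw [hprod]; simp
  · exfalso
    rw [List.concat_eq_append] at *
    have haΔ : a ∈ B.Δ := hl a (by simp)
    have hl' : ∀ x ∈ l', x ∈ B.Δ := fun x hx => hl x (by simp [hx])
    have hsplit : w * sref a = (l'.map sref).prod := by
      rw [hprod, List.map_append, List.prod_append]
      simp [mul_assoc]
    have hle : B.len (w * sref a) ≤ l'.length := B.wrd_len_le ⟨l', hl', rfl, hsplit⟩
    have hlt := B.len_lt_mul_sref hw haΔ (hp a (B.simple_isPos haΔ))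
    have hlength : l'.length + 1 = B.len w := by simpa using hlen
    omega

lemma longest_neg_all {w₀ : V ≃ₗᵢ[ℝ] V} (hw₀ : B.IsLongest R.Weyl w₀)
    {β : V} (hβ : B.IsPos β) : B.IsNeg (w₀ β) :=
  B.isNeg_comb subset_rfl hβ (fun γ hγ hout => absurd hγ hout)
    (fun a ha => weyl_maps hw₀.1 ha) (fun α hα => B.longest_neg_simple hw₀ hα)

lemma root_add_mem {α β : V} (hα : α ∈ R.Φ) (hβ : β ∈ R.Φ) (hin : ⟪α, β⟫ < 0)
    (hne : α ≠ -β) : α + β ∈ R.Φ := by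
  obtain ⟨m, hm⟩ := R.pairing_int β hβ α hα
  obtain ⟨n, hn⟩ := R.pairing_int α hα β hβ
  have haa : 0 < ⟪α, α⟫ := root_inner_pos hα
  have hbb : 0 < ⟪β, β⟫ := root_inner_pos hβ
  have hab : ⟪β, α⟫ = ⟪α, β⟫ := real_inner_comm α β
  have hsub : ∀ (x y : V), x ∈ R.Φ → y ∈ R.Φ → ∀ k : ℤ, 2 * ⟪x, y⟫ = (k : ℝ) * ⟪y, y⟫ →
      sref y x = x - (k : ℝ) • y := by
    intro x y hx hy k hk
    rw [sref_apply y x (root_ne_zero hy), cpair, hk, mul_div_assoc,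
      div_self (ne_of_gt (root_inner_pos hy)), mul_one]
  have hm0 : m ≤ -1 := by
    have hr : (m : ℝ) < 0 := by nlinarith
    have : m < 0 := by exact_mod_cast hr
    omega
  have hn0 : n ≤ -1 := by
    have hr : (n : ℝ) < 0 := by nlinarith [hn, hab]
    have : n < 0 := by exact_mod_cast hr
    omega
  by_cases hm1 : m = -1
  · have hmem := R.reflect_mem β hβ α hα
    rw [hsub α β hα hβ m hm, hm1] at hmem
    push_cast at hmem
    simpa [sub_neg_eq_add] using hmem
  · by_cases hn1 : n = -1
    · have hmem := R.reflect_mem α hα β hβ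
      rw [hsub β α hβ hα n hn, hn1] at hmem
      push_cast at hmem
      rw [show β - (-1 : ℝ) • α = α + β by rw [neg_smul, one_smul, sub_neg_eq_add]; abel]
        at hmem
      exact hmem
    · exfalso
      have hm2 : m ≤ -2 := by omega
      have hn2 : n ≤ -2 := by omega
      set c := ⟪α, β⟫ with hc
      have hprod4 : 4 * (c * c) = ((m : ℝ) * n) * (⟪α, α⟫ * ⟪β, β⟫) := by
        have h1 : (2 * c) * (2 * c) = ((m : ℝ) * ⟪β, β⟫) * ((n : ℝ) * ⟪α, α⟫) := by
          rw [← hm, ← hn, hab]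
        nlinarith [h1]
      have hmn4 : (4 : ℝ) ≤ (m : ℝ) * n := by
        have hm2' : (m : ℝ) ≤ -2 := by exact_mod_cast hm2
        have hn2' : (n : ℝ) ≤ -2 := by exact_mod_cast hn2
        nlinarith
      have hcsq : ⟪α, α⟫ * ⟪β, β⟫ ≤ c * c := by nlinarith
      set x := ⟪β, β⟫ • α - c • β with hx
      have hxx : ⟪x, x⟫ = ⟪β, β⟫ * (⟪β, β⟫ * ⟪α, α⟫ - c * c) := by
        simp only [hx, inner_sub_left, inner_sub_right, real_inner_smul_left,
          real_inner_smul_right]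
        rw [hab]
        ring
      have hxle : ⟪x, x⟫ ≤ 0 := by rw [hxx]; nlinarith
      have hx0 : x = 0 := by
        have := le_antisymm hxle real_inner_self_nonneg
        exact (@inner_self_eq_zero ℝ _ _ _ _ x).mp this
      have hx0' : ⟪β, β⟫ • α = c • β := sub_eq_zero.mp hx0
      have hne' : ⟪β, β⟫ ≠ 0 := ne_of_gt hbb
      have hαt : (c / ⟪β, β⟫) • β = α := by
        rw [div_eq_inv_mul, mul_smul, ← hx0', inv_smul_smul₀ hne']
      have hroot : (c / ⟪β, β⟫) • β ∈ R.Φ := by rw [hαt]; exact hα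
      rcases R.reduced β hβ _ hroot with h1 | h1
      · have : c = ⟪β, β⟫ := by
          field_simp at h1
          linarith [h1]
        nlinarith
      · rw [h1, neg_smul, one_smul] at hαt
        exact hne (hαt.symm)

lemma highest_isPos {h : V} (hh : B.IsHighest h) : B.IsPos h := by
  rcases B.pos_or_neg hh.1 with hp | hn
  · exact hp
  · exfalso
    obtain ⟨γ, hγ⟩ := R.nonempty
    have h1 : ∀ α ∈ B.Δ, B.coeff γ α = 0 := by
      intro α hα
      have a1 := hh.2 γ hγ α hα
      have a2 := hh.2 (-γ) (neg_mem hγ) α hα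
      rw [B.coeff_neg hγ hα] at a2
      have := hn.2 α hα
      omega
    apply root_ne_zero hγ
    rw [B.coeff_spec γ hγ]
    exact Finset.sum_eq_zero fun α hα => by rw [h1 α hα]; simp

lemma highest_inner_nonneg {h : V} (hh : B.IsHighest h) {α : V} (hα : α ∈ B.Δ) :
    0 ≤ ⟪h, α⟫ := by
  by_contra hcon
  push_neg at hcon
  have hne : h ≠ -α := by
    intro hc
    exact B.pos_neg_absurd (B.highest_isPos hh)
      (hc ▸ B.isNeg_neg (B.simple_isPos hα))
  have hmem : h + α ∈ R.Φ := root_add_mem hh.1 (B.subset hα) hcon hne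
  have hrep : h + α = ∑ δ ∈ B.Δ,
      ((B.coeff h δ : ℝ) + if δ = α then 1 else 0) • δ := by
    simp only [add_smul]
    rw [Finset.sum_add_distrib, ← B.coeff_spec h hh.1]
    congr 1
    rw [Finset.sum_congr rfl (fun δ (_ : δ ∈ B.Δ) =>
      show (if δ = α then (1 : ℝ) else 0) • δ = if δ = α then δ else 0 by
        split <;> simp)]
    rw [Finset.sum_ite_eq' B.Δ α (fun δ => δ), if_pos hα]
  have hco := (B.coeff_eq hmem hrep α hα).symm
  rw [if_pos rfl] at hco
  have hco' : B.coeff (h + α) α = B.coeff h α + 1 := by exact_mod_cast hco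
  have := hh.2 (h + α) hmem α hα
  omega

lemma highest_inner_nonneg_root {h β : V} (hh : B.IsHighest h) (hβ : B.IsPos β) :
    0 ≤ ⟪β, h⟫ := by
  have h1 : ⟪h, β⟫ = ∑ δ ∈ B.Δ, (B.coeff β δ : ℝ) * ⟪h, δ⟫ := by
    conv_lhs => rw [show β = ∑ δ ∈ B.Δ, (B.coeff β δ : ℝ) • δ from B.coeff_spec β hβ.1]
    rw [inner_sum]
    exact Finset.sum_congr rfl fun δ _ => real_inner_smul_right h δ _
  rw [real_inner_comm, h1]
  exact Finset.sum_nonneg fun δ hδ =>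
    mul_nonneg (by exact_mod_cast hβ.2 δ hδ) (B.highest_inner_nonneg hh hδ)

lemma orth_mem_span {h β : V} (hh : B.IsHighest h) (hβ : B.IsPos β)
    (horth : ⟪h, β⟫ = 0) :
    β ∈ Submodule.span ℝ ((B.Itil h : Finset V) : Set V) := by
  rw [B.mem_span_iff_coeff hβ.1 B.itil_subset]
  intro γ hγ hγI
  have hγin : ⟪h, γ⟫ ≠ 0 := by
    intro hc
    exact hγI (Finset.mem_filter.mpr ⟨hγ, hc⟩)
  have hγpos : 0 < ⟪h, γ⟫ := lt_of_le_of_ne (B.highest_inner_nonneg hh hγ) (Ne.symm hγin)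
  have h1 : ⟪h, β⟫ = ∑ δ ∈ B.Δ, (B.coeff β δ : ℝ) * ⟪h, δ⟫ := by
    conv_lhs => rw [show β = ∑ δ ∈ B.Δ, (B.coeff β δ : ℝ) • δ from B.coeff_spec β hβ.1]
    rw [inner_sum]
    exact Finset.sum_congr rfl fun δ _ => real_inner_smul_right h δ _
  have hterm : ∀ δ ∈ B.Δ, 0 ≤ (B.coeff β δ : ℝ) * ⟪h, δ⟫ := fun δ hδ =>
    mul_nonneg (by exact_mod_cast hβ.2 δ hδ) (B.highest_inner_nonneg hh hδ)
  have hzero : ∀ δ ∈ B.Δ, (B.coeff β δ : ℝ) * ⟪h, δ⟫ = 0 := by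
    intro δ hδ
    have := (Finset.sum_eq_zero_iff_of_nonneg hterm).mp (by rw [← h1, horth])
    exact this δ hδ
  have := hzero γ hγ
  rcases mul_eq_zero.mp this with hc | hc
  · exact_mod_cast hc
  · exact absurd hc (ne_of_gt hγpos)

lemma span_orth {h x : V} (hx : x ∈ Submodule.span ℝ ((B.Itil h : Finset V) : Set V)) :
    ⟪x, h⟫ = 0 := by
  induction hx using Submodule.span_induction with
  | mem y hy =>
      have := (Finset.mem_filter.mp hy).2
      rw [real_inner_comm]; exact this
  | zero => simp
  | add y z hy hz py pz => rw [inner_add_left, py, pz, add_zero]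
  | smul a y hy py => rw [real_inner_smul_left, py, mul_zero]

lemma sref_h_fix {h x : V} (hx : x ∈ Submodule.span ℝ ((B.Itil h : Finset V) : Set V)) :
    sref h x = x :=
  sref_orth h x (B.span_orth hx)

lemma sref_h_neg {h β : V} (hh : B.IsHighest h) (hβ : B.IsPos β)
    (hβs : β ∉ Submodule.span ℝ ((B.Itil h : Finset V) : Set V)) :
    B.IsNeg (sref h β) := by
  have hinner : 0 < ⟪β, h⟫ := by
    rcases (B.highest_inner_nonneg_root hh hβ).lt_or_eq with hl | he
    · exact hl
    · exact absurd (B.orth_mem_span hh hβ (by rw [real_inner_comm]; exact he.symm)) hβs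
  obtain ⟨n, hs, hn⟩ := sref_eq_sub hh.1 hβ.1
  have hn1 : 1 ≤ n := by
    have hhh : 0 < ⟪h, h⟫ := root_inner_pos hh.1
    have : 0 < (n : ℝ) := by nlinarith
    have : 0 < n := by exact_mod_cast this
    omega
  have hmem : sref h β ∈ R.Φ := R.reflect_mem h hh.1 β hβ.1
  refine ⟨hmem, fun γ hγ => ?_⟩
  have hrep : sref h β = ∑ δ ∈ B.Δ,
      ((B.coeff β δ : ℝ) - (n : ℝ) * (B.coeff h δ : ℝ)) • δ := by
    rw [hs]
    simp only [sub_smul]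
    rw [Finset.sum_sub_distrib, ← B.coeff_spec β hβ.1]
    congr 1
    rw [show ∑ δ ∈ B.Δ, ((n : ℝ) * (B.coeff h δ : ℝ)) • δ
        = (n : ℝ) • ∑ δ ∈ B.Δ, (B.coeff h δ : ℝ) • δ by
      rw [Finset.smul_sum]
      exact Finset.sum_congr rfl fun δ _ => (smul_smul _ _ _).symm]
    rw [← B.coeff_spec h hh.1]
  have hco := (B.coeff_eq hmem hrep γ hγ).symm
  have hco' : B.coeff (sref h β) γ = B.coeff β γ - n * B.coeff h γ := by exact_mod_cast hco
  have h1 := hh.2 β hβ.1 γ hγ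
  have h2 : 0 ≤ B.coeff h γ := (B.highest_isPos hh).2 γ hγ
  nlinarith [hco', h1, h2, hn1]

end Base

/-- with `Ĩ = {α ∈ Δ : (α̃|α) = 0}`, one has `w₀ w_Ĩ = w_Ĩ w₀ = s_{α̃}`,
where `w₀` is the longest element of `W`, `w_Ĩ` the longest element of `W_Ĩ` and
`α̃` the highest root. -/
theorem w0_mul_wItil_eq_sref_highest (R : NRootSystem V) (B : Base R) {h : V}
    (hh : B.IsHighest h) {w₀ wI : V ≃ₗᵢ[ℝ] V}
    (hw₀ : B.IsLongest R.Weyl w₀) (hwI : B.IsLongest (WeylP (B.Itil h)) wI) :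
    w₀ * wI = sref h ∧ wI * w₀ = sref h := by
  classical
  have hIΔ : B.Itil h ⊆ B.Δ := B.itil_subset
  have hIΦ : ((B.Itil h : Finset V) : Set V) ⊆ (R.Φ : Set V) := fun x hx =>
    B.subset (hIΔ hx)
  have hWI : wI ∈ R.Weyl := Base.weylP_sub_weyl hIΦ hwI.1
  have hW0 : w₀ ∈ R.Weyl := hw₀.1
  have hhΦ : h ∈ R.Φ := hh.1
  have hh0 : h ≠ 0 := Base.root_ne_zero hhΦ
  set SP : Submodule ℝ V := Submodule.span ℝ ((B.Itil h : Finset V) : Set V) with hSP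
  have htrans : ∀ u ∈ WeylP (B.Itil h), ∀ x : V, u x - x ∈ SP := fun u hu =>
    Base.weylP_translate (fun α hα => B.subset (hIΔ hα)) hu
  -- wI sends Itil-positive roots to negative roots
  have hneg_span : ∀ β : V, B.IsPos β → β ∈ SP → B.IsNeg (wI β) := by
    intro β hβ hβs
    exact B.isNeg_comb hIΔ hβ
      (fun γ hγ hout => (B.mem_span_iff_coeff hβ.1 hIΔ).mp hβs γ hγ hout)
      (fun a ha => Base.weyl_maps hWI ha)
      (fun α hα => B.longest_neg_simple_P hwI hα)
  have hpos_apart : ∀ β : V, B.IsPos β → β ∉ SP → B.IsPos (wI β) ∧ wI β ∉ SP := by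
    intro β hβ hβs
    exact B.isPos_apart hIΔ (htrans wI hwI.1) hβ hβs (Base.weyl_maps hWI hβ.1)
  -- wI is an involution
  have hwImem : ∀ x ∈ SP, wI x ∈ SP := by
    intro x hx
    have := htrans wI hwI.1 x
    have h2 : wI x = (wI x - x) + x := by abel
    rw [h2]
    exact Submodule.add_mem _ this hx
  have hwI2 : wI * wI = 1 := by
    apply B.eq_one_of_pos (mul_mem hWI hWI)
    intro β hβ
    rw [Base.mul_apply]
    by_cases hβs : β ∈ SP
    · have h1 : B.IsNeg (wI β) := hneg_span β hβ hβs
      have h2 : wI β ∈ SP := hwImem β hβs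
      have h3 : B.IsPos (-(wI β)) := B.isPos_neg h1
      have h4 : -(wI β) ∈ SP := Submodule.neg_mem _ h2
      have h5 : B.IsNeg (wI (-(wI β))) := hneg_span _ h3 h4
      have h6 : wI (-(wI β)) = -(wI (wI β)) := map_neg wI _
      rw [h6] at h5
      exact by simpa using B.isPos_neg h5
    · obtain ⟨h1, h2⟩ := hpos_apart β hβ hβs
      exact (hpos_apart _ h1 h2).1
  -- wI fixes h, hence commutes with sref h
  have hfix : wI h = h :=
    Base.weylP_fix (fun α hα => (Finset.mem_filter.mp hα).2) hwI.1
  have hconj : wI * sref h * wI⁻¹ = sref h := by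
    rw [sref_conj wI h hh0, hfix]
  have hcomm : wI * sref h = sref h * wI := by
    have := hconj
    rw [mul_inv_eq_iff_eq_mul] at this
    exact this
  -- u := sref h * wI sends all positive roots to negative roots
  set u : V ≃ₗᵢ[ℝ] V := sref h * wI with hu
  have huW : u ∈ R.Weyl := mul_mem (Base.sref_mem_weyl hhΦ) hWI
  have huneg : ∀ β : V, B.IsPos β → B.IsNeg (u β) := by
    intro β hβ
    rw [hu, Base.mul_apply]
    by_cases hβs : β ∈ SP
    · have h1 : B.IsNeg (wI β) := hneg_span β hβ hβs
      have h2 : wI β ∈ SP := hwImem β hβs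
      rw [B.sref_h_fix h2]
      exact h1
    · obtain ⟨h1, h2⟩ := hpos_apart β hβ hβs
      exact B.sref_h_neg hh h1 h2
  -- w₀ also sends all positive roots to negative roots, hence w₀ = u
  have hw0neg : ∀ β : V, B.IsPos β → B.IsNeg (w₀ β) :=
    fun β hβ => B.longest_neg_all hw₀ hβ
  have hw0inv_neg : ∀ δ : V, B.IsPos δ → B.IsNeg (w₀⁻¹ δ) := by
    intro δ hδ
    have hmem : w₀⁻¹ δ ∈ R.Φ := (Base.weyl_maps' hW0 δ hδ.1).2
    rcases B.pos_or_neg hmem with hp | hn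
    · exfalso
      have h1 : B.IsNeg (w₀ (w₀⁻¹ δ)) := hw0neg _ hp
      have h2 : w₀ (w₀⁻¹ δ) = δ := by
        rw [Base.inv_apply_symm, w₀.apply_symm_apply]
      rw [h2] at h1
      exact B.pos_neg_absurd hδ h1
    · exact hn
  have heq : w₀ = u := by
    have hv : w₀⁻¹ * u = 1 := by
      apply B.eq_one_of_pos (mul_mem (inv_mem hW0) huW)
      intro β hβ
      rw [Base.mul_apply]
      have h1 : B.IsNeg (u β) := huneg β hβ
      have h2 : B.IsPos (-(u β)) := B.isPos_neg h1
      have h3 : B.IsNeg (w₀⁻¹ (-(u β))) := hw0inv_neg _ h2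
      have h4 : w₀⁻¹ (-(u β)) = -(w₀⁻¹ (u β)) := map_neg _ _
      rw [h4] at h3
      exact by simpa using B.isPos_neg h3
    have := inv_mul_eq_one.mp hv
    exact this
  constructor
  · rw [heq, hu, mul_assoc, hwI2, mul_one]
  · rw [heq, hu, ← mul_assoc, hcomm, hu, mul_assoc, hwI2, mul_one]
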